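/- Let T ⊂ ℝ^d be bounded with diam(T) = Δ, and for δ ∈ [0, Δ] define the Dudley integrals 𝒥_δ(T) = ∫_δ^Δ √(h_T(ε)) dε and 𝒥_δ^loc(T) = ∫_δ^Δ √(h_T^loc(ε)) dε. Then 𝒥_δ^loc(T) ≤ 𝒥_δ(T) ≤ 4·𝒥_{δ/4}^loc(T). -/

import Mathlib

open MeasureTheory Metric Set
open scoped ENNReal NNReal

noncomputable section

/-- `packNum A B` is the `B`-packing number of `A`: the largest cardinality of a finite
subset `A₀ ⊆ A` such that `x − y ∉ B` for all distinct `x, y ∈ A₀`. -/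
def packNum {E : Type*} [Sub E] (A B : Set E) : ℕ :=
  sSup {n : ℕ | ∃ s : Finset E, ↑s ⊆ A ∧
    (∀ x ∈ s, ∀ y ∈ s, x ≠ y → x - y ∉ B) ∧ s.card = n}

/-- Global packing entropy `h_T(ε) = log M(T, εB₂)`. -/
def entGlob {d : ℕ} (T : Set (EuclideanSpace ℝ (Fin d))) (ε : ℝ) : ℝ :=
  Real.log (packNum T (closedBall 0 ε))

/-- Local packing entropy
`h_T^loc(ε) = sup_{δ ≥ ε} sup_{x ∈ T} log M(T ∩ (x + 2δB₂), δB₂)`. -/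
def entLoc {d : ℕ} (T : Set (EuclideanSpace ℝ (Fin d))) (ε : ℝ) : ℝ :=
  ⨆ δ : {δ : ℝ // ε ≤ δ}, ⨆ x : T,
    Real.log (packNum (T ∩ closedBall (x : EuclideanSpace ℝ (Fin d)) (2 * δ.1))
      (closedBall 0 δ.1))

namespace Statement10Aux

variable {d : ℕ}

abbrev Pt (d : ℕ) := EuclideanSpace ℝ (Fin d)

/-- The set of achievable packing cardinalities. -/
def packSet (A B : Set (Pt d)) : Set ℕ :=
  {n : ℕ | ∃ s : Finset (Pt d), ↑s ⊆ A ∧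
    (∀ x ∈ s, ∀ y ∈ s, x ≠ y → x - y ∉ B) ∧ s.card = n}

lemma packNum_eq (A B : Set (Pt d)) : packNum A B = sSup (packSet A B) := rfl

lemma zero_mem_packSet (A B : Set (Pt d)) : 0 ∈ packSet A B :=
  ⟨∅, by simp⟩

lemma not_mem_iff {x y : Pt d} {ε : ℝ} :
    x - y ∉ closedBall (0 : Pt d) ε ↔ ε < dist x y := by
  rw [mem_closedBall, dist_zero_right, ← dist_eq_norm, not_le]

lemma sep_card_le {T : Set (Pt d)} (hbd : Bornology.IsBounded T) {ε : ℝ} (hε : 0 < ε)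
    {s : Finset (Pt d)} (hsub : ↑s ⊆ T)
    (hsep : ∀ x ∈ s, ∀ y ∈ s, x ≠ y → x - y ∉ closedBall (0 : Pt d) ε) :
    (s.card : ℝ) ≤ ((2 * diam T + ε) / ε) ^ d := by
  rcases s.eq_empty_or_nonempty with rfl | ⟨c, hc⟩
  · simp only [Finset.card_empty, Nat.cast_zero]
    positivity
  have hcT : c ∈ T := hsub hc
  have hΔ0 : (0:ℝ) ≤ diam T := diam_nonneg
  set μ := (volume : Measure (Pt d))
  have hdisj : (↑s : Set (Pt d)).PairwiseDisjoint fun x => closedBall x (ε / 2) := by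
    intro x hx y hy hxy
    refine closedBall_disjoint_closedBall ?_
    have := not_mem_iff.1 (hsep x hx y hy hxy)
    linarith
  have hsubU : (⋃ x ∈ s, closedBall x (ε / 2)) ⊆ closedBall c (diam T + ε / 2) := by
    intro z hz
    simp only [mem_iUnion, exists_prop] at hz
    obtain ⟨x, hx, hzx⟩ := hz
    have h1 : dist z x ≤ ε / 2 := hzx
    have h2 : dist x c ≤ diam T := dist_le_diam_of_mem hbd (hsub hx) hcT
    have : dist z c ≤ dist z x + dist x c := dist_triangle _ _ _
    simp only [mem_closedBall]
    linarith
  have hball : ∀ x : Pt d, μ (closedBall x (ε/2)) =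
      ENNReal.ofReal ((ε/2) ^ d) * μ (ball 0 1) := by
    intro x
    have := Measure.addHaar_closedBall μ x (by positivity : (0:ℝ) ≤ ε/2)
    simpa [finrank_euclideanSpace_fin] using this
  have hμU : μ (⋃ x ∈ s, closedBall x (ε / 2)) =
      (s.card : ℝ≥0∞) * (ENNReal.ofReal ((ε/2) ^ d) * μ (ball 0 1)) := by
    rw [measure_biUnion_finset hdisj fun b _ => measurableSet_closedBall]
    rw [Finset.sum_congr rfl fun x _ => hball x, Finset.sum_const, nsmul_eq_mul]
  have hbig : μ (closedBall c (diam T + ε / 2)) =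
      ENNReal.ofReal ((diam T + ε/2) ^ d) * μ (ball 0 1) := by
    have := Measure.addHaar_closedBall μ c (by positivity : (0:ℝ) ≤ diam T + ε/2)
    simpa [finrank_euclideanSpace_fin] using this
  have hle : (s.card : ℝ≥0∞) * (ENNReal.ofReal ((ε/2) ^ d) * μ (ball 0 1)) ≤
      ENNReal.ofReal ((diam T + ε/2) ^ d) * μ (ball 0 1) := by
    rw [← hμU, ← hbig]
    exact measure_mono hsubU
  have hμb0 : μ (ball (0:Pt d) 1) ≠ 0 := (measure_ball_pos μ 0 one_pos).ne'
  have hμbt : μ (ball (0:Pt d) 1) ≠ ⊤ := measure_ball_lt_top.ne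
  rw [← mul_assoc] at hle
  have hle2 : (s.card : ℝ≥0∞) * ENNReal.ofReal ((ε/2) ^ d) ≤
      ENNReal.ofReal ((diam T + ε/2) ^ d) :=
    (ENNReal.mul_le_mul_iff_left hμb0 hμbt).1 hle
  have hle3 : ENNReal.ofReal ((s.card : ℝ) * (ε/2) ^ d) ≤
      ENNReal.ofReal ((diam T + ε/2) ^ d) := by
    rwa [ENNReal.ofReal_mul (by positivity), ENNReal.ofReal_natCast]
  have hle4 : (s.card : ℝ) * (ε/2) ^ d ≤ (diam T + ε/2) ^ d := by
    have := (ENNReal.ofReal_le_ofReal_iff (by positivity)).1 hle3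
    exact this
  have hεd : (0:ℝ) < (ε/2) ^ d := by positivity
  rw [← le_div_iff₀ hεd] at hle4
  have hbase : (diam T + ε/2) / (ε/2) = (2 * diam T + ε) / ε := by
    field_simp
  calc (s.card : ℝ) ≤ (diam T + ε/2) ^ d / (ε/2) ^ d := hle4
    _ = ((diam T + ε/2) / (ε/2)) ^ d := (div_pow _ _ _).symm
    _ = ((2 * diam T + ε) / ε) ^ d := by rw [hbase]

lemma packSet_bddAbove {T : Set (Pt d)} (hbd : Bornology.IsBounded T)
    {A : Set (Pt d)} (hA : A ⊆ T) {ε ε' : ℝ}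
    (hε : 0 < ε) (hεε' : ε ≤ ε') : BddAbove (packSet A (closedBall (0:Pt d) ε')) := by
  refine ⟨⌈((2 * diam T + ε) / ε) ^ d⌉₊, fun n hn => ?_⟩
  obtain ⟨s, hsub, hsep, rfl⟩ := hn
  have hsep' : ∀ x ∈ s, ∀ y ∈ s, x ≠ y → x - y ∉ closedBall (0:Pt d) ε := by
    intro x hx y hy hxy h
    exact hsep x hx y hy hxy (closedBall_subset_closedBall hεε' h)
  have h := (sep_card_le hbd hε (hsub.trans hA) hsep').trans (Nat.le_ceil _)
  exact_mod_cast h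

lemma packNum_mono {T A A' : Set (Pt d)} (hbd : Bornology.IsBounded T)
    (hAA' : A ⊆ A') (hA'T : A' ⊆ T) {ε ε' : ℝ} (hε' : 0 < ε') (h : ε' ≤ ε) :
    packNum A (closedBall (0:Pt d) ε) ≤ packNum A' (closedBall (0:Pt d) ε') := by
  refine csSup_le_csSup (packSet_bddAbove hbd hA'T hε' le_rfl)
    ⟨0, zero_mem_packSet _ _⟩ ?_
  rintro n ⟨s, hsub, hsep, rfl⟩
  exact ⟨s, hsub.trans hAA', fun x hx y hy hxy hmem =>
    hsep x hx y hy hxy (closedBall_subset_closedBall h hmem), rfl⟩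

lemma packNum_mem {T A : Set (Pt d)} (hbd : Bornology.IsBounded T) (hA : A ⊆ T)
    {ε : ℝ} (hε : 0 < ε) :
    packNum A (closedBall (0:Pt d) ε) ∈ packSet A (closedBall (0:Pt d) ε) :=
  Nat.sSup_mem ⟨0, zero_mem_packSet _ _⟩ (packSet_bddAbove hbd hA hε le_rfl)

lemma one_le_packNum {T : Set (Pt d)} (hbd : Bornology.IsBounded T) (hne : T.Nonempty)
    {ε : ℝ} (hε : 0 < ε) :
    1 ≤ packNum T (closedBall (0:Pt d) ε) := by
  obtain ⟨x, hx⟩ := hne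
  refine le_csSup (packSet_bddAbove hbd subset_rfl hε le_rfl) ?_
  exact ⟨{x}, by simpa using hx, by simp, by simp⟩

lemma log_nat_mono {m n : ℕ} (h : m ≤ n) : Real.log m ≤ Real.log n := by
  rcases Nat.eq_zero_or_pos m with rfl | hm
  · simpa using Real.log_natCast_nonneg n
  · exact Real.log_le_log (by exact_mod_cast hm) (by exact_mod_cast h)

lemma entGlob_nonneg (T : Set (Pt d)) (ε : ℝ) : 0 ≤ entGlob T ε :=
  Real.log_natCast_nonneg _

lemma entGlob_anti {T : Set (Pt d)} (hbd : Bornology.IsBounded T) :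
    AntitoneOn (entGlob T) (Ioi 0) := fun a ha _ _ hab =>
  log_nat_mono (packNum_mono hbd subset_rfl subset_rfl ha hab)

lemma entGlob_le_bound {T : Set (Pt d)} (hbd : Bornology.IsBounded T)
    {ε : ℝ} (hε : 0 < ε) (hεΔ : ε ≤ diam T) :
    entGlob T ε ≤ 3 * d * diam T / ε := by
  have hΔ0 : (0:ℝ) ≤ diam T := diam_nonneg
  have hb1 : (1:ℝ) ≤ (2 * diam T + ε) / ε := by
    rw [le_div_iff₀ hε]; linarith
  have hP : (packNum T (closedBall (0:Pt d) ε) : ℝ) ≤ ((2 * diam T + ε) / ε) ^ d := by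
    obtain ⟨s, hsub, hsep, hcard⟩ := packNum_mem hbd subset_rfl hε (T := T)
    rw [← hcard]
    exact sep_card_le hbd hε hsub hsep
  have h1 : entGlob T ε ≤ Real.log (((2 * diam T + ε) / ε) ^ d) := by
    show Real.log _ ≤ _
    rcases Nat.eq_zero_or_pos (packNum T (closedBall (0:Pt d) ε)) with h | h
    · rw [h]
      simpa using Real.log_nonneg (one_le_pow₀ hb1)
    · exact Real.log_le_log (by exact_mod_cast h) hP
  have h2 : Real.log (((2 * diam T + ε) / ε) ^ d) = d * Real.log ((2 * diam T + ε) / ε) :=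
    Real.log_pow _ d
  have h3 : Real.log ((2 * diam T + ε) / ε) ≤ (2 * diam T + ε) / ε := by
    linarith [Real.log_le_sub_one_of_pos (lt_of_lt_of_le one_pos hb1)]
  have h4 : (d:ℝ) * ((2 * diam T + ε) / ε) ≤ 3 * d * diam T / ε := by
    rw [mul_div_assoc', div_le_div_iff₀ hε hε]
    have hd0 : (0:ℝ) ≤ (d:ℝ) := Nat.cast_nonneg d
    nlinarith [mul_le_mul_of_nonneg_left hεΔ hd0]
  calc entGlob T ε ≤ Real.log (((2 * diam T + ε) / ε) ^ d) := h1
    _ = d * Real.log ((2 * diam T + ε) / ε) := h2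
    _ ≤ d * ((2 * diam T + ε) / ε) := by
        exact mul_le_mul_of_nonneg_left h3 (Nat.cast_nonneg d)
    _ ≤ 3 * d * diam T / ε := h4

lemma entGlob_eq_zero_of_ge {T : Set (Pt d)} (hbd : Bornology.IsBounded T)
    {ε : ℝ} (h : diam T ≤ ε) : entGlob T ε = 0 := by
  have hle : packNum T (closedBall (0:Pt d) ε) ≤ 1 := by
    refine csSup_le ⟨0, zero_mem_packSet _ _⟩ ?_
    rintro n ⟨s, hsub, hsep, rfl⟩
    by_contra hn
    push_neg at hn
    obtain ⟨x, hx, y, hy, hxy⟩ := Finset.one_lt_card.1 hn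
    refine hsep x hx y hy hxy ?_
    rw [mem_closedBall, dist_zero_right, ← dist_eq_norm]
    exact (dist_le_diam_of_mem hbd (hsub hx) (hsub hy)).trans h
  rcases Nat.le_one_iff_eq_zero_or_eq_one.1 hle with h' | h' <;>
    simp [entGlob, h']

/-- The local entropy term. -/
def locTerm (T : Set (Pt d)) (r : ℝ) (x : Pt d) : ℝ :=
  Real.log (packNum (T ∩ closedBall x (2 * r)) (closedBall (0:Pt d) r))

lemma entLoc_eq (T : Set (Pt d)) (ε : ℝ) :
    entLoc T ε = ⨆ r : {r : ℝ // ε ≤ r}, ⨆ x : T, locTerm T r.1 x.1 := rfl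

lemma locTerm_le_entGlob {T : Set (Pt d)} (hbd : Bornology.IsBounded T)
    {ε r : ℝ} (hε : 0 < ε) (hr : ε ≤ r) (x : Pt d) :
    locTerm T r x ≤ entGlob T ε :=
  log_nat_mono (packNum_mono hbd inter_subset_left subset_rfl hε hr)

variable {T : Set (Pt d)}

lemma entLoc_le_entGlob (hbd : Bornology.IsBounded T) (hne : T.Nonempty)
    {ε : ℝ} (hε : 0 < ε) : entLoc T ε ≤ entGlob T ε := by
  haveI : Nonempty {r : ℝ // ε ≤ r} := ⟨⟨ε, le_rfl⟩⟩
  haveI := hne.to_subtype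
  rw [entLoc_eq]
  exact ciSup_le fun r => ciSup_le fun x => locTerm_le_entGlob hbd hε r.2 x.1

lemma bddAbove_inner (hbd : Bornology.IsBounded T) {ε : ℝ} (hε : 0 < ε)
    {r : ℝ} (hr : ε ≤ r) :
    BddAbove (Set.range fun x : T => locTerm T r x.1) := by
  refine ⟨entGlob T ε, ?_⟩
  rintro _ ⟨x, rfl⟩
  exact locTerm_le_entGlob hbd hε hr x.1

lemma bddAbove_outer (hbd : Bornology.IsBounded T) {ε : ℝ} (hε : 0 < ε) :
    BddAbove (Set.range fun r : {r : ℝ // ε ≤ r} => ⨆ x : T, locTerm T r.1 x.1) := by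
  refine ⟨entGlob T ε, ?_⟩
  rintro _ ⟨r, rfl⟩
  rcases isEmpty_or_nonempty T with h | h
  · simpa [Real.iSup_of_isEmpty] using entGlob_nonneg T ε
  · exact ciSup_le fun x => locTerm_le_entGlob hbd hε r.2 x.1

lemma le_entLoc (hbd : Bornology.IsBounded T) {ε r : ℝ} (hε : 0 < ε) (hr : ε ≤ r)
    {x : Pt d} (hx : x ∈ T) :
    locTerm T r x ≤ entLoc T ε := by
  haveI : Nonempty {r' : ℝ // ε ≤ r'} := ⟨⟨ε, le_rfl⟩⟩
  rw [entLoc_eq]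
  have h1 : locTerm T r x ≤ ⨆ y : T, locTerm T r y.1 :=
    le_ciSup (bddAbove_inner hbd hε hr) (⟨x, hx⟩ : T)
  exact h1.trans (le_ciSup (bddAbove_outer hbd hε) (⟨r, hr⟩ : {r' : ℝ // ε ≤ r'}))

lemma entLoc_nonneg (hbd : Bornology.IsBounded T) (hne : T.Nonempty)
    {ε : ℝ} (hε : 0 < ε) : 0 ≤ entLoc T ε := by
  obtain ⟨x, hx⟩ := hne
  refine le_trans ?_ (le_entLoc hbd hε le_rfl hx)
  exact Real.log_natCast_nonneg _

lemma entLoc_anti (hbd : Bornology.IsBounded T) (hne : T.Nonempty) :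
    AntitoneOn (entLoc T) (Ioi 0) := by
  intro a ha b _ hab
  haveI : Nonempty {r : ℝ // b ≤ r} := ⟨⟨b, le_rfl⟩⟩
  haveI := hne.to_subtype
  rw [entLoc_eq T b]
  refine ciSup_le fun r => ?_
  exact ciSup_le fun x => le_entLoc hbd ha (hab.trans r.2) x.2

lemma entGlob_le_add (hbd : Bornology.IsBounded T) (hne : T.Nonempty)
    {ε : ℝ} (hε : 0 < ε) :
    entGlob T ε ≤ entGlob T (2 * ε) + entLoc T ε := by
  classical
  have h2ε : 0 < 2 * ε := by linarith
  obtain ⟨s, hs_sub, hs_sep, hs_card⟩ := packNum_mem hbd subset_rfl hε (T := T)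
  obtain ⟨t, ht_sub, ht_sep, ht_card⟩ := packNum_mem hbd subset_rfl h2ε (T := T)
  rcases Nat.eq_zero_or_pos (packNum T (closedBall (0:Pt d) ε)) with hM0 | hM1
  · have h0 : entGlob T ε = 0 := by simp [entGlob, hM0]
    rw [h0]
    exact add_nonneg (entGlob_nonneg T _) (entLoc_nonneg hbd hne hε)
  have hnet : ∀ z ∈ T, ∃ y ∈ t, dist z y ≤ 2 * ε := by
    intro z hz
    by_contra hcon
    push_neg at hcon
    have hzt : z ∉ t := fun h => by
      have := hcon z h
      simp [dist_self] at this
      linarith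
    have hmem : (t.card + 1) ∈ packSet T (closedBall (0:Pt d) (2*ε)) := by
      refine ⟨insert z t, ?_, ?_, by rw [Finset.card_insert_of_notMem hzt]⟩
      · rw [Finset.coe_insert]
        exact Set.insert_subset hz ht_sub
      · intro x hx y hy hxy
        rcases Finset.mem_insert.1 hx with rfl | hx' <;>
          rcases Finset.mem_insert.1 hy with rfl | hy'
        · exact absurd rfl hxy
        · exact not_mem_iff.2 (hcon y hy')
        · refine not_mem_iff.2 ?_
          rw [dist_comm]
          exact hcon x hx'
        · exact ht_sep x hx' y hy' hxy
    have h2 : t.card + 1 ≤ packNum T (closedBall (0:Pt d) (2*ε)) :=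
      le_csSup (packSet_bddAbove hbd subset_rfl h2ε le_rfl) hmem
    rw [← ht_card] at h2
    omega
  have hex : ∀ z : Pt d, z ∈ s → ∃ y, y ∈ t ∧ dist z y ≤ 2 * ε := by
    intro z hz
    obtain ⟨y, hy, h⟩ := hnet z (hs_sub hz)
    exact ⟨y, hy, h⟩
  choose! f hf1 hf2 using hex
  have hcount : s.card = ∑ y ∈ t, (s.filter fun z => f z = y).card :=
    Finset.card_eq_sum_card_fiberwise fun z hz => hf1 z hz
  set L := entLoc T ε with hL
  have hfiber : ∀ y ∈ t, ((s.filter fun z => f z = y).card : ℝ) ≤ Real.exp L := by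
    intro y hy
    have hyT : y ∈ T := ht_sub hy
    have hmem : (s.filter fun z => f z = y).card ∈
        packSet (T ∩ closedBall y (2*ε)) (closedBall (0:Pt d) ε) := by
      refine ⟨s.filter fun z => f z = y, ?_, ?_, rfl⟩
      · intro z hz
        have hz' := Finset.mem_filter.1 hz
        refine ⟨hs_sub hz'.1, ?_⟩
        rw [mem_closedBall, ← hz'.2]
        exact hf2 z hz'.1
      · intro x hx y' hy' hxy
        exact hs_sep x (Finset.mem_filter.1 hx).1 y' (Finset.mem_filter.1 hy').1 hxy
    have h1 : (s.filter fun z => f z = y).card ≤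
        packNum (T ∩ closedBall y (2*ε)) (closedBall (0:Pt d) ε) :=
      le_csSup (packSet_bddAbove hbd inter_subset_left hε le_rfl) hmem
    have h2 : Real.log (packNum (T ∩ closedBall y (2*ε)) (closedBall (0:Pt d) ε) : ℝ) ≤ L :=
      le_entLoc hbd hε le_rfl hyT
    have h3 : ((packNum (T ∩ closedBall y (2*ε)) (closedBall (0:Pt d) ε) : ℕ) : ℝ) ≤
        Real.exp L := by
      rcases Nat.eq_zero_or_pos (packNum (T ∩ closedBall y (2*ε)) (closedBall (0:Pt d) ε))
        with h | h
      · rw [h]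
        exact_mod_cast (Real.exp_pos L).le
      · calc ((packNum (T ∩ closedBall y (2*ε)) (closedBall (0:Pt d) ε) : ℕ) : ℝ)
            = Real.exp (Real.log _) := (Real.exp_log (by exact_mod_cast h)).symm
          _ ≤ Real.exp L := Real.exp_le_exp.2 h2
    exact le_trans (by exact_mod_cast h1) h3
  have hMle : ((packNum T (closedBall (0:Pt d) ε) : ℕ) : ℝ) ≤ (t.card : ℝ) * Real.exp L := by
    have h1 : ((s.card : ℕ) : ℝ) ≤ ∑ y ∈ t, Real.exp L := by
      rw [hcount]
      push_cast
      exact Finset.sum_le_sum hfiber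
    rw [hs_card] at h1
    simpa [Finset.sum_const, nsmul_eq_mul] using h1
  have hN1 : 1 ≤ t.card := by
    rw [ht_card]
    exact one_le_packNum hbd hne h2ε
  have hstep : entGlob T ε ≤ Real.log ((t.card : ℝ) * Real.exp L) :=
    Real.log_le_log (by exact_mod_cast hM1) hMle
  have heq : Real.log ((t.card : ℝ) * Real.exp L) = Real.log (t.card : ℝ) + L := by
    rw [Real.log_mul (by exact_mod_cast Nat.one_le_iff_ne_zero.1 hN1) (Real.exp_ne_zero _),
      Real.log_exp]
  rw [heq] at hstep
  have : Real.log (t.card : ℝ) = entGlob T (2 * ε) := by rw [ht_card]; rfl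
  rwa [this] at hstep

lemma sqrt_add_le' {a b : ℝ} (ha : 0 ≤ a) (hb : 0 ≤ b) :
    Real.sqrt (a + b) ≤ Real.sqrt a + Real.sqrt b := by
  have h : a + b ≤ (Real.sqrt a + Real.sqrt b) ^ 2 := by
    rw [add_sq, Real.sq_sqrt ha, Real.sq_sqrt hb]
    nlinarith [Real.sqrt_nonneg a, Real.sqrt_nonneg b]
  calc Real.sqrt (a + b) ≤ Real.sqrt ((Real.sqrt a + Real.sqrt b) ^ 2) :=
        Real.sqrt_le_sqrt h
    _ = Real.sqrt a + Real.sqrt b := Real.sqrt_sq (by positivity)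

lemma sqrt_ii {f : ℝ → ℝ} {C Δa : ℝ}
    (hanti : AntitoneOn f (Ioi 0)) (hC : 0 ≤ C)
    (hbd : ∀ ε ∈ Ioc (0:ℝ) Δa, f ε ≤ C / ε) {a : ℝ} (ha : 0 ≤ a) (haΔ : a ≤ Δa) :
    IntervalIntegrable (fun ε => Real.sqrt (f ε)) volume a Δa := by
  rw [intervalIntegrable_iff_integrableOn_Ioc_of_le haΔ]
  have hsub : Ioc a Δa ⊆ Ioi 0 := fun x hx => lt_of_le_of_lt ha hx.1
  have hmeas : AEMeasurable (fun ε => Real.sqrt (f ε)) (volume.restrict (Ioc a Δa)) :=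
    aemeasurable_restrict_of_antitoneOn measurableSet_Ioc
      (fun x hx y hy hxy => Real.sqrt_le_sqrt (hanti (hsub hx) (hsub hy) hxy))
  refine Integrable.mono' (g := fun ε => Real.sqrt C * ε ^ (-(1/2) : ℝ)) ?_
    hmeas.aestronglyMeasurable ?_
  · have h : IntervalIntegrable (fun ε : ℝ => Real.sqrt C * ε ^ (-(1/2) : ℝ)) volume a Δa :=
      (intervalIntegral.intervalIntegrable_rpow' (by norm_num)).const_mul _
    exact (intervalIntegrable_iff_integrableOn_Ioc_of_le haΔ).1 h
  · filter_upwards [ae_restrict_mem measurableSet_Ioc] with ε hε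
    have hε0 : 0 < ε := lt_of_le_of_lt ha hε.1
    have h1 : Real.sqrt (f ε) ≤ Real.sqrt (C / ε) :=
      Real.sqrt_le_sqrt (hbd ε ⟨hε0, hε.2⟩)
    have h2 : Real.sqrt (C / ε) = Real.sqrt C * ε ^ (-(1/2) : ℝ) := by
      rw [Real.sqrt_div hC, Real.rpow_neg hε0.le, ← Real.sqrt_eq_rpow, div_eq_mul_inv]
    calc ‖Real.sqrt (f ε)‖ = Real.sqrt (f ε) := Real.norm_of_nonneg (Real.sqrt_nonneg _)
      _ ≤ Real.sqrt C * ε ^ (-(1/2) : ℝ) := h1.trans_eq h2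

lemma glob_ii (hbd : Bornology.IsBounded T) {a : ℝ} (ha : 0 ≤ a) (haΔ : a ≤ diam T) :
    IntervalIntegrable (fun ε => Real.sqrt (entGlob T ε)) volume a (diam T) :=
  sqrt_ii (entGlob_anti hbd) (by positivity)
    (fun ε hε => entGlob_le_bound hbd hε.1 hε.2) ha haΔ

lemma loc_ii (hbd : Bornology.IsBounded T) (hne : T.Nonempty)
    {a : ℝ} (ha : 0 ≤ a) (haΔ : a ≤ diam T) :
    IntervalIntegrable (fun ε => Real.sqrt (entLoc T ε)) volume a (diam T) :=
  sqrt_ii (entLoc_anti hbd hne) (by positivity)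
    (fun ε hε => (entLoc_le_entGlob hbd hne hε.1).trans (entGlob_le_bound hbd hε.1 hε.2))
    ha haΔ

lemma glob_ii_zero (hbd : Bornology.IsBounded T) (hΔ : 0 < diam T)
    {c : ℝ} (hc : 0 ≤ c) :
    IntervalIntegrable (fun ε => Real.sqrt (entGlob T ε)) volume 0 c := by
  rcases le_or_gt c (diam T) with h | h
  · exact (glob_ii hbd le_rfl diam_nonneg).trans ((glob_ii hbd hc h).symm)
  · refine (glob_ii hbd le_rfl diam_nonneg).trans ?_
    rw [intervalIntegrable_iff_integrableOn_Ioc_of_le h.le]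
    refine (integrableOn_zero (s := Ioc (diam T) c)).congr_fun ?_ measurableSet_Ioc
    intro x hx
    simp [entGlob_eq_zero_of_ge hbd hx.1.le]

lemma glob_ii' (hbd : Bornology.IsBounded T) (hΔ : 0 < diam T)
    {a b : ℝ} (ha : 0 ≤ a) (hb : 0 ≤ b) :
    IntervalIntegrable (fun ε => Real.sqrt (entGlob T ε)) volume a b :=
  ((glob_ii_zero hbd hΔ ha).symm).trans (glob_ii_zero hbd hΔ hb)

lemma glob_int_zero (hbd : Bornology.IsBounded T) {c : ℝ} (hc : diam T ≤ c) :
    (∫ ε in (diam T)..c, Real.sqrt (entGlob T ε)) = 0 := by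
  rw [intervalIntegral.integral_congr (g := fun _ => 0) ?_]
  · simp
  · intro x hx
    rw [uIcc_of_le hc] at hx
    simp [entGlob_eq_zero_of_ge hbd hx.1]

end Statement10Aux

open Statement10Aux in
/-- For bounded `T ⊆ ℝ^d` with `Δ = diam T`, and Dudley integrals
`𝒥_δ(T) = ∫_δ^Δ √(h_T(ε)) dε`, `𝒥_δ^loc(T) = ∫_δ^Δ √(h_T^loc(ε)) dε`, for every
`δ ∈ [0, Δ]` one has `𝒥_δ^loc(T) ≤ 𝒥_δ(T) ≤ 4𝒥_{δ/4}^loc(T)`. -/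
theorem statement10 {d : ℕ} (T : Set (EuclideanSpace ℝ (Fin d)))
    (hbd : Bornology.IsBounded T) (δ : ℝ) (hδ : δ ∈ Set.Icc 0 (diam T)) :
    (∫ ε in δ..diam T, Real.sqrt (entLoc T ε)) ≤
      (∫ ε in δ..diam T, Real.sqrt (entGlob T ε)) ∧
    (∫ ε in δ..diam T, Real.sqrt (entGlob T ε)) ≤
      4 * ∫ ε in (δ / 4)..(diam T), Real.sqrt (entLoc T ε) := by
  obtain ⟨hδ0, hδΔ⟩ := hδ
  rcases eq_or_lt_of_le (diam_nonneg : (0:ℝ) ≤ diam T) with h0 | hΔ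
  · have hδ0' : δ = 0 := le_antisymm (hδΔ.trans h0.symm.le) hδ0
    rw [hδ0', ← h0]
    norm_num
  have hne : T.Nonempty := by
    by_contra h
    rw [Set.not_nonempty_iff_eq_empty] at h
    subst h
    simp [Metric.diam_empty] at hΔ
  -- integrability
  have I1 : IntervalIntegrable (fun ε => Real.sqrt (entGlob T ε)) volume δ (diam T) :=
    glob_ii hbd hδ0 hδΔ
  have I2 : IntervalIntegrable (fun ε => Real.sqrt (entLoc T ε)) volume δ (diam T) :=
    loc_ii hbd hne hδ0 hδΔ
  have I2' : IntervalIntegrable (fun ε => Real.sqrt (entLoc T ε)) volume (δ/4) (diam T) :=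
    loc_ii hbd hne (by linarith) (by linarith)
  have Icomp : IntervalIntegrable (fun ε => Real.sqrt (entGlob T (2 * ε))) volume δ (diam T) := by
    have h := (glob_ii' hbd hΔ (by linarith : (0:ℝ) ≤ 2*δ)
      (by positivity : (0:ℝ) ≤ 2 * diam T)).comp_mul_left (c := 2)
    rwa [show 2*δ/2 = δ by ring, show 2*diam T/2 = diam T by ring] at h
  have h0ae : ∀ᵐ ε ∂(volume.restrict (Icc δ (diam T))), 0 < ε := by
    rw [ae_restrict_iff' measurableSet_Icc, ae_iff]
    refine measure_mono_null ?_ (measure_singleton (0:ℝ))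
    intro x hx
    simp only [mem_setOf_eq, not_forall, not_lt] at hx
    have hx1 : x ∈ Icc δ (diam T) := by tauto
    have hx2 : x ≤ 0 := by tauto
    have : x = 0 := le_antisymm hx2 (le_trans hδ0 hx1.1)
    simp [this]
  constructor
  · exact intervalIntegral.integral_mono_ae_restrict hδΔ I2 I1
      (h0ae.mono fun ε hε => Real.sqrt_le_sqrt (entLoc_le_entGlob hbd hne hε))
  · have step1 : (∫ ε in δ..diam T, Real.sqrt (entGlob T ε)) ≤
        ∫ ε in δ..diam T, (Real.sqrt (entGlob T (2*ε)) + Real.sqrt (entLoc T ε)) := by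
      refine intervalIntegral.integral_mono_ae_restrict hδΔ I1 (Icomp.add I2)
        (h0ae.mono fun ε hε => ?_)
      refine (Real.sqrt_le_sqrt (entGlob_le_add hbd hne hε)).trans
        (sqrt_add_le' (entGlob_nonneg T _) (entLoc_nonneg hbd hne hε))
    have step2 : (∫ ε in δ..diam T, (Real.sqrt (entGlob T (2*ε)) + Real.sqrt (entLoc T ε))) =
        (∫ ε in δ..diam T, Real.sqrt (entGlob T (2*ε))) +
          ∫ ε in δ..diam T, Real.sqrt (entLoc T ε) :=
      intervalIntegral.integral_add Icomp I2
    have step3 : (∫ ε in δ..diam T, Real.sqrt (entGlob T (2*ε))) =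
        2⁻¹ * ∫ u in (2*δ)..(2*diam T), Real.sqrt (entGlob T u) := by
      rw [intervalIntegral.integral_comp_mul_left (fun u => Real.sqrt (entGlob T u))
        (two_ne_zero), smul_eq_mul]
    have step4 : (∫ u in (2*δ)..(2*diam T), Real.sqrt (entGlob T u)) =
        ∫ u in (2*δ)..(diam T), Real.sqrt (entGlob T u) := by
      rw [← intervalIntegral.integral_add_adjacent_intervals
        (glob_ii' hbd hΔ (by linarith) diam_nonneg)
        (glob_ii' hbd hΔ diam_nonneg (by positivity))
        (a := 2*δ) (b := diam T) (c := 2*diam T),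
        glob_int_zero hbd (by linarith), add_zero]
    have step5 : (∫ u in (2*δ)..(diam T), Real.sqrt (entGlob T u)) ≤
        ∫ ε in δ..diam T, Real.sqrt (entGlob T ε) := by
      rcases le_or_gt (2*δ) (diam T) with h | h
      · have hadj := intervalIntegral.integral_add_adjacent_intervals
          (glob_ii' hbd hΔ hδ0 (by linarith : (0:ℝ) ≤ 2*δ))
          (glob_ii' hbd hΔ (by linarith) diam_nonneg)
          (a := δ) (b := 2*δ) (c := diam T)
        have hnn : 0 ≤ ∫ u in δ..(2*δ), Real.sqrt (entGlob T u) :=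
          intervalIntegral.integral_nonneg (by linarith) (fun u _ => Real.sqrt_nonneg _)
        linarith
      · rw [intervalIntegral.integral_symm (diam T) (2*δ), glob_int_zero hbd h.le, neg_zero]
        exact intervalIntegral.integral_nonneg hδΔ (fun u _ => Real.sqrt_nonneg _)
    have hA2 : (∫ ε in δ..diam T, Real.sqrt (entGlob T ε)) ≤
        2 * ∫ ε in δ..diam T, Real.sqrt (entLoc T ε) := by
      have h1 := step1
      rw [step2, step3, step4] at h1
      linarith
    have hBB : (∫ ε in δ..diam T, Real.sqrt (entLoc T ε)) ≤
        ∫ ε in (δ/4)..(diam T), Real.sqrt (entLoc T ε) := by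
      have Iq : IntervalIntegrable (fun ε => Real.sqrt (entLoc T ε)) volume (δ/4) δ :=
        I2'.trans I2.symm
      have hadj := intervalIntegral.integral_add_adjacent_intervals Iq I2
        (a := δ/4) (b := δ) (c := diam T)
      have hnn : 0 ≤ ∫ ε in (δ/4)..δ, Real.sqrt (entLoc T ε) :=
        intervalIntegral.integral_nonneg (by linarith) (fun u _ => Real.sqrt_nonneg _)
      linarith
    have hBnn : 0 ≤ ∫ ε in (δ/4)..(diam T), Real.sqrt (entLoc T ε) :=
      intervalIntegral.integral_nonneg (by linarith) (fun u _ => Real.sqrt_nonneg _)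
    linarith

end
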